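/- (Intermediate upper bound on neural fragility) Let A be a real n×n matrix with operator 2-norm ‖A‖₂ < 1, let r be a real number that is not an eigenvalue of A, and let k ∈ {1,…,n}. Then the neural fragility Γ_A = (rI − A)⁻¹e_k / (e_kᵀ(rI − A)⁻ᵀ(rI − A)⁻¹e_k) satisfies ‖Γ_A‖₂ ≤ ‖(A − rI)⁻¹‖₂ · (|r| + 1)². -/

import Mathlib

open Matrix

/-- Euclidean (l2) norm of a vector in `Fin n → ℝ`. -/
noncomputable def euclNorm {n : ℕ} (v : Fin n → ℝ) : ℝ :=
  ‖(EuclideanSpace.equiv (Fin n) ℝ).symm v‖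

/-- Operator norm of a real matrix induced by the Euclidean vector norm. -/
noncomputable def matOpNorm {n : ℕ} (A : Matrix (Fin n) (Fin n) ℝ) : ℝ :=
  ‖Matrix.toEuclideanCLM (𝕜 := ℝ) A‖

/-- Intermediate upper bound on neural fragility:
`‖Γ_A‖₂ ≤ ‖(A − rI)⁻¹‖₂ (|r| + 1)²` when `‖A‖₂ < 1`. -/
theorem fragility_intermediate_upper_bound
    (n : ℕ) (hn : 1 ≤ n) (A : Matrix (Fin n) (Fin n) ℝ)
    (hA : matOpNorm A < 1)
    (r : ℝ) (hr : r ∉ spectrum ℝ A) (k : Fin n)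
    (Γ : Fin n → ℝ)
    (hΓ : Γ = (Pi.single k 1 ⬝ᵥ
        ((((r • (1 : Matrix (Fin n) (Fin n) ℝ) - A)⁻¹)ᵀ *
          (r • (1 : Matrix (Fin n) (Fin n) ℝ) - A)⁻¹) *ᵥ Pi.single k 1))⁻¹ •
        ((r • (1 : Matrix (Fin n) (Fin n) ℝ) - A)⁻¹ *ᵥ Pi.single k 1)) :
    euclNorm Γ ≤
      matOpNorm ((A - r • (1 : Matrix (Fin n) (Fin n) ℝ))⁻¹) * (|r| + 1) ^ 2 := by
  haveI : NeZero n := ⟨by omega⟩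
  haveI : Nontrivial (EuclideanSpace ℝ (Fin n)) := by
    refine ⟨(WithLp.equiv 2 (Fin n → ℝ)).symm (Pi.single ⟨0, hn⟩ 1), 0, fun h => ?_⟩
    have := congrFun (congrArg (WithLp.equiv 2 (Fin n → ℝ)) h) ⟨0, hn⟩
    simpa using this
  set M : Matrix (Fin n) (Fin n) ℝ := r • (1 : Matrix (Fin n) (Fin n) ℝ) - A with hMdef
  have hM : IsUnit M := by
    rw [spectrum.notMem_iff] at hr
    rwa [Algebra.algebraMap_eq_smul_one] at hr
  have hMdet : IsUnit M.det := (Matrix.isUnit_iff_isUnit_det M).mp hM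
  set e : Fin n → ℝ := Pi.single k 1 with he
  set v : Fin n → ℝ := M⁻¹ *ᵥ e with hv
  -- M *ᵥ v = e
  have hMv : M *ᵥ v = e := by
    rw [hv, Matrix.mulVec_mulVec, Matrix.mul_nonsing_inv M hMdet, Matrix.one_mulVec]
  -- the denominator equals v ⬝ᵥ v
  have hden : e ⬝ᵥ ((M⁻¹ᵀ * M⁻¹) *ᵥ e) = v ⬝ᵥ v := by
    rw [← Matrix.mulVec_mulVec, Matrix.dotProduct_mulVec, Matrix.vecMul_transpose, ← hv]
  -- Euclidean space versions
  set ev : EuclideanSpace ℝ (Fin n) := (WithLp.equiv 2 (Fin n → ℝ)).symm v with hev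
  set ee : EuclideanSpace ℝ (Fin n) := (WithLp.equiv 2 (Fin n → ℝ)).symm e with hee
  have hee_norm : ‖ee‖ = 1 := by
    have h1 : ee = EuclideanSpace.single k (1:ℝ) := rfl
    rw [h1, EuclideanSpace.norm_single]; norm_num
  have hdvv : v ⬝ᵥ v = ‖ev‖ ^ 2 := by
    rw [← real_inner_self_eq_norm_sq]
    simp [hev, PiLp.inner_apply, dotProduct, mul_comm]
    rw [EuclideanSpace.norm_eq, Real.sq_sqrt (by positivity)]; simp [sq]
  -- v ≠ 0
  have hvne : ‖ev‖ ≠ 0 := by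
    intro h
    have : ev = 0 := norm_eq_zero.mp h
    have hv0 : v = 0 := by
      have := congrArg (WithLp.equiv 2 (Fin n → ℝ)) this
      simpa [hev] using this
    have : e = 0 := by rw [← hMv, hv0, Matrix.mulVec_zero]
    have := congrFun this k
    simp [he] at this
  have hvpos : 0 < ‖ev‖ := lt_of_le_of_ne (norm_nonneg _) (Ne.symm hvne)
  -- CLM application
  have happ : ∀ (X : Matrix (Fin n) (Fin n) ℝ) (x : Fin n → ℝ),
      Matrix.toEuclideanCLM (𝕜 := ℝ) X ((WithLp.equiv 2 (Fin n → ℝ)).symm x)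
        = (WithLp.equiv 2 (Fin n → ℝ)).symm (X *ᵥ x) := by
    intro X x; simp [Matrix.toLin'_apply]
  -- euclNorm Γ = ‖ev‖⁻¹
  have hΓnorm : euclNorm Γ = ‖ev‖⁻¹ := by
    have h1 : euclNorm Γ = ‖(WithLp.equiv 2 (Fin n → ℝ)).symm Γ‖ := rfl
    have h2 : (WithLp.equiv 2 (Fin n → ℝ)).symm Γ = (v ⬝ᵥ v)⁻¹ • ev := by
      rw [hΓ, hden]
      rfl
    rw [h1, h2, norm_smul, hdvv]
    rw [Real.norm_eq_abs, abs_inv, abs_of_nonneg (by positivity)]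
    field_simp
  -- ‖ev‖⁻¹ ≤ matOpNorm M
  have hstep1 : ‖ev‖⁻¹ ≤ matOpNorm M := by
    rw [inv_le_iff_one_le_mul₀ hvpos]
    have hle : ‖Matrix.toEuclideanCLM (𝕜 := ℝ) M ev‖ ≤ matOpNorm M * ‖ev‖ :=
      (Matrix.toEuclideanCLM (𝕜 := ℝ) M).le_opNorm ev
    rw [happ M v] at hle
    · calc (1:ℝ) = ‖ee‖ := hee_norm.symm
        _ ≤ matOpNorm M * ‖ev‖ := by
            have : ((WithLp.equiv 2 (Fin n → ℝ)).symm (M *ᵥ v)) = ee := by rw [hMv]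
            rw [this] at hle; linarith [hle]
  -- matOpNorm M ≤ |r| + 1
  have hstep2 : matOpNorm M ≤ |r| + 1 := by
    have hone : ‖(1 : EuclideanSpace ℝ (Fin n) →L[ℝ] EuclideanSpace ℝ (Fin n))‖ = 1 :=
      ContinuousLinearMap.norm_id
    have : Matrix.toEuclideanCLM (𝕜 := ℝ) M
        = r • (1 : EuclideanSpace ℝ (Fin n) →L[ℝ] EuclideanSpace ℝ (Fin n))
          - Matrix.toEuclideanCLM (𝕜 := ℝ) A := by
      rw [hMdef, map_sub, _root_.map_smul, _root_.map_one]
    rw [matOpNorm, this]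
    calc ‖r • (1 : EuclideanSpace ℝ (Fin n) →L[ℝ] EuclideanSpace ℝ (Fin n))
          - Matrix.toEuclideanCLM (𝕜 := ℝ) A‖
        ≤ ‖r • (1 : EuclideanSpace ℝ (Fin n) →L[ℝ] EuclideanSpace ℝ (Fin n))‖
          + ‖Matrix.toEuclideanCLM (𝕜 := ℝ) A‖ := norm_sub_le _ _
      _ ≤ |r| + 1 := by
          have h2 : ‖r • (1 : EuclideanSpace ℝ (Fin n) →L[ℝ] EuclideanSpace ℝ (Fin n))‖
              = |r| := by
            rw [norm_smul r (1 : EuclideanSpace ℝ (Fin n) →L[ℝ] EuclideanSpace ℝ (Fin n)),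
              hone, Real.norm_eq_abs, mul_one]
          have h3 : ‖Matrix.toEuclideanCLM (𝕜 := ℝ) A‖ ≤ 1 := le_of_lt hA
          linarith
  -- 1 ≤ matOpNorm M⁻¹ * matOpNorm M
  have hstep3 : 1 ≤ matOpNorm M⁻¹ * matOpNorm M := by
    have hmul : Matrix.toEuclideanCLM (𝕜 := ℝ) M⁻¹ * Matrix.toEuclideanCLM (𝕜 := ℝ) M
        = 1 := by
      rw [← _root_.map_mul, Matrix.nonsing_inv_mul M hMdet, _root_.map_one]
    calc (1:ℝ) = ‖(1 : EuclideanSpace ℝ (Fin n) →L[ℝ] EuclideanSpace ℝ (Fin n))‖ :=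
          ContinuousLinearMap.norm_id.symm
      _ = ‖Matrix.toEuclideanCLM (𝕜 := ℝ) M⁻¹ * Matrix.toEuclideanCLM (𝕜 := ℝ) M‖ := by
          rw [hmul]
      _ ≤ matOpNorm M⁻¹ * matOpNorm M := norm_mul_le _ _
  -- (A - r•1)⁻¹ = -(M⁻¹) and norms agree
  have hneg : (A - r • (1 : Matrix (Fin n) (Fin n) ℝ))⁻¹ = -(M⁻¹) := by
    have h1 : A - r • (1 : Matrix (Fin n) (Fin n) ℝ) = -M := by rw [hMdef, neg_sub]
    rw [h1]
    refine Matrix.inv_eq_right_inv ?_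
    rw [Matrix.neg_mul, Matrix.mul_neg, neg_neg, Matrix.mul_nonsing_inv M hMdet]
  have hnormneg : matOpNorm ((A - r • (1 : Matrix (Fin n) (Fin n) ℝ))⁻¹) = matOpNorm M⁻¹ := by
    rw [hneg, matOpNorm, _root_.map_neg, norm_neg]; rfl
  rw [hΓnorm, hnormneg]
  have hBnn : 0 ≤ matOpNorm M⁻¹ := norm_nonneg _
  have hMnn : 0 ≤ matOpNorm M := norm_nonneg _
  have habs : 0 ≤ |r| := abs_nonneg r
  nlinarith [mul_le_mul_of_nonneg_left hstep2 hBnn, mul_le_mul_of_nonneg_right hstep3 (by linarith : (0:ℝ) ≤ |r| + 1)]
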